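/- Let Z : ℝ → {1,...,N} be a quantizer for a K-PAM Gaussian channel whose quantization regions are determined by N-1 polynomial constraints of degree at most K-1 in the variable φ = e^{dgy} (each region being the intersection of the solution sets of these constraints). Then the number of disjoint maximal intervals mapped to any single quantized output is at most (N-1)⌊(K-1)/2⌋ + 1. -/

import Mathlib

open Polynomial Set


lemma root_left {p : ℝ[X]} (hp : p ≠ 0) {u v : ℝ} (huv : u < v)
    (hu : 0 ≤ p.eval u) (hv : p.eval v < 0) :
    ∃ r, r ∈ p.roots ∧ u ≤ r ∧ r < v := by
  rcases eq_or_lt_of_le hu with h | h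
  · exact ⟨u, (mem_roots hp).2 h.symm, le_refl u, huv⟩
  · have h0 : (0:ℝ) ∈ Ioo (p.eval v) (p.eval u) := ⟨hv, h⟩
    obtain ⟨r, hr, hr0⟩ := intermediate_value_Ioo' huv.le (p.continuous.continuousOn) h0
    exact ⟨r, (mem_roots hp).2 hr0, hr.1.le, hr.2⟩

lemma root_right {p : ℝ[X]} (hp : p ≠ 0) {u v : ℝ} (huv : v < u)
    (hu : 0 ≤ p.eval u) (hv : p.eval v < 0) :
    ∃ r, r ∈ p.roots ∧ v < r ∧ r ≤ u := by
  rcases eq_or_lt_of_le hu with h | h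
  · exact ⟨u, (mem_roots hp).2 h.symm, huv, le_refl u⟩
  · have h0 : (0:ℝ) ∈ Ioo (p.eval v) (p.eval u) := ⟨hv, h⟩
    obtain ⟨r, hr, hr0⟩ := intermediate_value_Ioo huv.le (p.continuous.continuousOn) h0
    exact ⟨r, (mem_roots hp).2 hr0, hr.1, hr.2.le⟩

lemma root_pair {p : ℝ[X]} (hp : p ≠ 0) {x y u : ℝ} (hxu : x < u) (huy : u < y)
    (hx : p.eval x < 0) (hy : p.eval y < 0) (hu : 0 ≤ p.eval u) :
    ∃ m : Multiset ℝ, m ≤ p.roots ∧ Multiset.card m = 2 ∧ ∀ r ∈ m, x < r ∧ r < y := by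
  by_cases hw : ∃ w, x < w ∧ w < y ∧ 0 < p.eval w
  · obtain ⟨w, hxw, hwy, hw⟩ := hw
    obtain ⟨r1, hr1, hr1'⟩ := intermediate_value_Ioo hxw.le p.continuous.continuousOn ⟨hx, hw⟩
    obtain ⟨r2, hr2, hr2'⟩ := intermediate_value_Ioo' hwy.le p.continuous.continuousOn ⟨hy, hw⟩
    refine ⟨{r1, r2}, ?_, rfl, ?_⟩
    · rw [Multiset.le_iff_count]
      intro b
      have hne : r1 ≠ r2 := ne_of_lt (hr1.2.trans hr2.1)
      have hc : Multiset.count b ({r1, r2} : Multiset ℝ) ≤ 1 := by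
        rcases eq_or_ne b r1 with rfl | h1 <;> rcases eq_or_ne b r2 with rfl | h2 <;>
          simp_all [Multiset.count_cons, Multiset.count_singleton]
      rcases eq_or_ne b r1 with rfl | h1
      · exact hc.trans (by rw [count_roots]; exact (rootMultiplicity_pos hp).2 hr1')
      rcases eq_or_ne b r2 with rfl | h2
      · exact hc.trans (by rw [count_roots]; exact (rootMultiplicity_pos hp).2 hr2')
      · simp [Multiset.count_cons, Multiset.count_singleton, h1, h2]
    · intro r hr
      rcases Multiset.mem_cons.1 hr with rfl | hr
      · exact ⟨hr1.1, hr1.2.trans hr2.1 |>.trans hr2.2⟩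
      · rw [Multiset.mem_singleton] at hr; subst hr
        exact ⟨hr1.1.trans (hr1.2.trans hr2.1), hr2.2⟩
  · push_neg at hw
    have hle : ∀ w ∈ Ioo x y, p.eval w ≤ 0 := fun w hw' => hw w hw'.1 hw'.2
    have hu0 : p.eval u = 0 := le_antisymm (hle u ⟨hxu, huy⟩) hu
    have hmax : IsLocalMax (fun t => p.eval t) u := by
      filter_upwards [Ioo_mem_nhds hxu huy] with w hw'
      rw [hu0]; exact hle w hw'
    have hd : p.derivative.eval u = 0 := by
      have := hmax.deriv_eq_zero
      rwa [Polynomial.deriv] at this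
    refine ⟨Multiset.replicate 2 u, ?_, Multiset.card_replicate 2 u, ?_⟩
    · rw [Multiset.le_iff_count]
      intro b
      rcases eq_or_ne b u with rfl | h
      · rw [Multiset.count_replicate_self, count_roots]
        exact (one_lt_rootMultiplicity_iff_isRoot hp).2 ⟨hu0, hd⟩
      · simp [Multiset.count_replicate, h]
    · intro r hr
      rw [Multiset.eq_of_mem_replicate hr]
      exact ⟨hxu, huy⟩

lemma multiset_add_le {s m1 m2 : Multiset ℝ} (h1 : m1 ≤ s) (h2 : m2 ≤ s)
    (hd : ∀ a ∈ m1, a ∉ m2) : m1 + m2 ≤ s := by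
  rw [Multiset.le_iff_count]
  intro b
  rw [Multiset.count_add]
  by_cases hb : b ∈ m1
  · have : Multiset.count b m2 = 0 := Multiset.count_eq_zero.2 (hd b hb)
    rw [this, add_zero]; exact (Multiset.le_iff_count.1 h1) b
  · have : Multiset.count b m1 = 0 := Multiset.count_eq_zero.2 hb
    rw [this, zero_add]; exact (Multiset.le_iff_count.1 h2) b

lemma mid_chain : ∀ (n : ℕ) (p : ℝ[X]), p ≠ 0 → ∀ (v u : ℕ → ℝ),
    (∀ i, i ≤ n → p.eval (v i) < 0) → (∀ i, i < n → 0 ≤ p.eval (u i)) →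
    (∀ i, i < n → v i < u i) → (∀ i, i < n → u i < v (i+1)) →
    ∃ m : Multiset ℝ, m ≤ p.roots ∧ Multiset.card m = 2*n ∧ ∀ r ∈ m, v 0 < r ∧ r < v n := by
  intro n
  induction n with
  | zero => intro p hp v u _ _ _ _; exact ⟨0, zero_le, rfl, by simp⟩
  | succ n ih =>
    intro p hp v u hv hu h1 h2
    obtain ⟨m1, hm1le, hm1c, hm1mem⟩ := root_pair hp (h1 0 (Nat.succ_pos n))
      (h2 0 (Nat.succ_pos n)) (hv 0 (Nat.zero_le _)) (hv 1 (by omega)) (hu 0 (Nat.succ_pos n))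
    obtain ⟨m2, hm2le, hm2c, hm2mem⟩ := ih p hp (fun i => v (i+1)) (fun i => u (i+1))
      (fun i hi => hv (i+1) (by omega)) (fun i hi => hu (i+1) (by omega))
      (fun i hi => h1 (i+1) (by omega)) (fun i hi => h2 (i+1) (by omega))
    refine ⟨m1 + m2, multiset_add_le hm1le hm2le ?_, by rw [Multiset.card_add, hm1c, hm2c]; ring, ?_⟩
    · intro a ha ha2
      exact absurd ((hm2mem a ha2).1) (not_lt.2 (hm1mem a ha).2.le)
    · intro r hr
      have hv01 : v 0 < v 1 := (h1 0 (Nat.succ_pos n)).trans (h2 0 (Nat.succ_pos n))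
      rcases Multiset.mem_add.1 hr with h | h
      · have hb := hm1mem r h
        rcases Nat.eq_zero_or_pos n with rfl | hn
        · exact hb
        · have : v 1 ≤ v (n+1) := by
            clear hb hr h hm2mem hm2c hm2le hm1mem hm1c hm1le
            have step : ∀ i, i < n + 1 → v i < v (i+1) :=
              fun i hi => (h1 i hi).trans (h2 i hi)
            have : ∀ k, 1 + k ≤ n + 1 → v 1 ≤ v (1 + k) := by
              intro k
              induction k with
              | zero => simp
              | succ k ihk =>
                intro hk
                calc v 1 ≤ v (1+k) := ihk (by omega)
                  _ ≤ v (1+k+1) := (step (1+k) (by omega)).le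
                  _ = v (1 + (k+1)) := by ring_nf
            have := this n (by omega)
            rwa [add_comm] at this
          exact ⟨hb.1, hb.2.trans_le this⟩
      · have hb := hm2mem r h
        exact ⟨hv01.trans hb.1, hb.2⟩

lemma full_chain {n : ℕ} {p : ℝ[X]} {v u : ℕ → ℝ}
    (hv : ∀ i, i ≤ n → p.eval (v i) < 0) (hu : ∀ i, i ≤ n+1 → 0 ≤ p.eval (u i))
    (h1 : ∀ i, i ≤ n → u i < v i) (h2 : ∀ i, i ≤ n → v i < u (i+1)) :
    2*n + 2 ≤ p.natDegree := by
  have hp : p ≠ 0 := by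
    intro h
    have := hv 0 (Nat.zero_le _)
    rw [h] at this
    simp at this
  obtain ⟨m, hmle, hmc, hmmem⟩ := mid_chain n p hp v (fun i => u (i+1))
    hv (fun i hi => hu (i+1) (by omega)) (fun i hi => h2 i (by omega))
    (fun i hi => h1 (i+1) (by omega))
  obtain ⟨r0, hr0, hr0a, hr0b⟩ := root_left hp (h1 0 (Nat.zero_le _)) (hu 0 (by omega)) (hv 0 (Nat.zero_le _))
  obtain ⟨r1, hr1, hr1a, hr1b⟩ := root_right hp (h2 n (le_refl n)) (hu (n+1) (le_refl _)) (hv n (le_refl n))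
  have hv0n : v 0 ≤ v n := by
    have step : ∀ i, i < n → v i < v (i+1) := fun i hi =>
      (h2 i (by omega)).trans (h1 (i+1) (by omega))
    have : ∀ k, k ≤ n → v 0 ≤ v k := by
      intro k
      induction k with
      | zero => simp
      | succ k ihk => intro hk; exact (ihk (by omega)).trans (step k (by omega)).le
    exact this n (le_refl n)
  have key : ({r0} : Multiset ℝ) + ({r1} + m) ≤ p.roots := by
    apply multiset_add_le (by simpa using hr0)
    · apply multiset_add_le (by simpa using hr1) hmle
      intro a ha ham
      rw [Multiset.mem_singleton] at ha; subst ha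
      exact absurd (hmmem a ham).2 (not_lt.2 hr1a.le)
    · intro a ha ham
      rw [Multiset.mem_singleton] at ha; subst ha
      rcases Multiset.mem_add.1 ham with h | h
      · rw [Multiset.mem_singleton] at h; subst h
        exact absurd (hr0b.trans_le (hv0n.trans hr1a.le)) (lt_irrefl _)
      · exact absurd (hmmem a h).1 (not_lt.2 hr0b.le)
  have hcard := Multiset.card_le_card key
  rw [Multiset.card_add, Multiset.card_add, Multiset.card_singleton, Multiset.card_singleton, hmc] at hcard
  have := p.card_roots'
  omega
lemma exp_chain {p : ℝ[X]} {c : ℕ} (hdeg : p.natDegree ≤ 2*c+1) (e : ℝ) {v u : ℕ → ℝ}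
    (hv : ∀ i, i ≤ c → p.eval (Real.exp (e * v i)) < 0)
    (hu : ∀ i, i ≤ c+1 → 0 ≤ p.eval (Real.exp (e * u i)))
    (h1 : ∀ i, i ≤ c → u i < v i) (h2 : ∀ i, i ≤ c → v i < u (i+1)) : False := by
  rcases lt_trichotomy e 0 with he | he | he
  · -- e < 0 : reverse the chain
    have := full_chain (n := c) (p := p) (v := fun j => Real.exp (e * v (c - j)))
      (u := fun j => Real.exp (e * u (c + 1 - j)))
      (fun i hi => hv (c - i) (by omega))
      (fun i hi => hu (c + 1 - i) (by omega))
      (fun i hi => by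
        have h : v (c - i) < u (c - i + 1) := h2 (c - i) (by omega)
        show Real.exp (e * u (c + 1 - i)) < Real.exp (e * v (c - i))
        have hrw : c + 1 - i = c - i + 1 := by omega
        rw [hrw]
        exact Real.exp_lt_exp.2 (by nlinarith)
        )
      (fun i hi => by
        have h : u (c - i) < v (c - i) := h1 (c - i) (by omega)
        show Real.exp (e * v (c - i)) < Real.exp (e * u (c + 1 - (i + 1)))
        have hrw : c + 1 - (i + 1) = c - i := by omega
        rw [hrw]
        exact Real.exp_lt_exp.2 (by nlinarith))
    omega
  · -- e = 0
    subst he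
    have hb := hv 0 (Nat.zero_le _)
    have ha := hu 0 (by omega)
    simp only [zero_mul] at hb ha
    linarith
  · -- e > 0
    have := full_chain (n := c) (p := p) (v := fun j => Real.exp (e * v j))
      (u := fun j => Real.exp (e * u j))
      hv hu
      (fun i hi => Real.exp_lt_exp.2 (by nlinarith [h1 i hi]))
      (fun i hi => Real.exp_lt_exp.2 (by nlinarith [h2 i hi]))
    omega
theorem stmt_3 (N K : ℕ) (hN : 1 ≤ N) (hK : 1 ≤ K) (d g : ℝ)
    (a : Fin K → Fin N → ℝ) (Z : ℝ → Fin N)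
    (hZ : ∀ z : Fin N, {y : ℝ | Z y = z} =
      ⋂ z' ∈ {z' : Fin N | z' ≠ z},
        {y : ℝ | 0 ≤ ∑ i : Fin K, (a i z - a i z') * (Real.exp (d * g * y)) ^ (i : ℕ)}) :
    ∀ z : Fin N, ∃ m : ℕ, m ≤ (N - 1) * ((K - 1) / 2) + 1 ∧
      ∃ I : Fin m → Set ℝ, (∀ j, (I j).OrdConnected) ∧
        (Pairwise fun j j' => Disjoint (I j) (I j')) ∧
        {y : ℝ | Z y = z} = ⋃ j, I j := by
  intro z
  set c : ℕ := (K - 1) / 2 with hc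
  set M : ℕ := (N - 1) * c + 1 with hM
  set S : Set ℝ := {y : ℝ | Z y = z} with hSdef
  -- the polynomials
  set poly : Fin N → ℝ[X] := fun z' => ∑ i : Fin K, C (a i z - a i z') * X ^ (i : ℕ) with hpoly
  have hEval : ∀ (z' : Fin N) (x : ℝ),
      (poly z').eval x = ∑ i : Fin K, (a i z - a i z') * x ^ (i : ℕ) := by
    intro z' x
    simp [hpoly, eval_finset_sum]
  have hDeg : ∀ z' : Fin N, (poly z').natDegree ≤ 2 * c + 1 := by
    intro z'
    have : (poly z').natDegree ≤ K - 1 := by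
      apply Polynomial.natDegree_sum_le_of_forall_le
      intro i _
      calc (C (a i z - a i z') * X ^ (i : ℕ)).natDegree ≤ (X ^ (i:ℕ) : ℝ[X]).natDegree :=
            natDegree_C_mul_le _ _
        _ = (i : ℕ) := natDegree_X_pow _
        _ ≤ K - 1 := by have := i.2; omega
    have h2 : K - 1 ≤ 2 * c + 1 := by omega
    omega
  have hmemS : ∀ x : ℝ, x ∈ S ↔ ∀ z' : Fin N, z' ≠ z →
      0 ≤ (poly z').eval (Real.exp (d * g * x)) := by
    intro x
    rw [hSdef, hZ z]
    simp only [Set.mem_iInter, Set.mem_setOf_eq]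
    constructor
    · intro h z' hz'; rw [hEval]; exact h z' hz'
    · intro h z' hz'; rw [← hEval]; exact h z' hz'
  -- key cardinality bound
  have key : ∀ R : Finset ℝ, ↑R ⊆ S →
      (∀ x ∈ R, ∀ y ∈ R, x ≠ y → ¬ (Set.uIcc x y ⊆ S)) → R.card ≤ M := by
    intro R hRS hRne
    by_contra hcard
    push_neg at hcard
    have hMcard : M < R.card := hcard
    set e := R.orderIsoOfFin rfl with he
    set r : Fin R.card → ℝ := fun i => (e i : ℝ) with hr
    have hrmono : StrictMono r := fun i j hij => by
      exact_mod_cast e.strictMono hij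
    have hrR : ∀ i, r i ∈ R := fun i => (e i).2
    -- gap points
    have hgap : ∀ i : Fin M, ∃ (gp : ℝ) (z' : Fin N), z' ≠ z ∧
        r ⟨(i:ℕ), by omega⟩ < gp ∧ gp < r ⟨(i:ℕ)+1, by have := i.2; omega⟩ ∧
        (poly z').eval (Real.exp (d * g * gp)) < 0 := by
      intro i
      have hi1 : (i : ℕ) < R.card := by have := i.2; omega
      have hi2 : (i : ℕ) + 1 < R.card := by have := i.2; omega
      set x := r ⟨(i:ℕ), hi1⟩
      set y := r ⟨(i:ℕ)+1, hi2⟩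
      have hxy : x < y := hrmono (by exact Fin.mk_lt_mk.2 (by omega))
      have hns : ¬ (Set.uIcc x y ⊆ S) :=
        hRne x (hrR _) y (hrR _) (ne_of_lt hxy)
      rw [Set.not_subset] at hns
      obtain ⟨gp, hgp1, hgp2⟩ := hns
      rw [Set.uIcc_of_le hxy.le] at hgp1
      have hx : x ∈ S := hRS (hrR _)
      have hy : y ∈ S := hRS (hrR _)
      have hgx : x < gp := lt_of_le_of_ne hgp1.1 (by rintro rfl; exact hgp2 hx)
      have hgy : gp < y := lt_of_le_of_ne hgp1.2 (by rintro rfl; exact hgp2 hy)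
      have : ¬ ∀ z' : Fin N, z' ≠ z → 0 ≤ (poly z').eval (Real.exp (d * g * gp)) := by
        intro h; exact hgp2 ((hmemS gp).2 h)
      push_neg at this
      obtain ⟨z', hz', hlt⟩ := this
      exact ⟨gp, z', hz', hgx, hgy, hlt⟩
    choose G W hWz hG1 hG2 hGneg using hgap
    -- pigeonhole
    have hmaps : ∀ i : Fin M, i ∈ (Finset.univ : Finset (Fin M)) →
        W i ∈ (Finset.univ.erase z) := fun i _ => Finset.mem_erase.2 ⟨hWz i, Finset.mem_univ _⟩
    have hcount : (Finset.univ.erase z).card * c < (Finset.univ : Finset (Fin M)).card := by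
      rw [Finset.card_erase_of_mem (Finset.mem_univ _), Finset.card_univ, Fintype.card_fin,
        Finset.card_univ, Fintype.card_fin]
      omega
    obtain ⟨z', hz'mem, hz'count⟩ :=
      Finset.exists_lt_card_fiber_of_mul_lt_card_of_maps_to hmaps hcount
    have hz'ne : z' ≠ z := (Finset.mem_erase.1 hz'mem).1
    set F := Finset.univ.filter (fun i : Fin M => W i = z') with hF
    have hFcard : c + 1 ≤ F.card := hz'count
    obtain ⟨F', hF'sub, hF'card⟩ := Finset.exists_subset_card_eq hFcard
    set o := F'.orderIsoOfFin hF'card with ho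
    set idx : ℕ → Fin M := fun j => if h : j < c + 1 then (o ⟨j, h⟩ : Fin M)
      else (o ⟨0, by omega⟩ : Fin M) with hidx
    have hidxmono : ∀ j j' : ℕ, j < j' → j' ≤ c → idx j < idx j' := by
      intro j j' hjj hj'
      rw [hidx]
      simp only [dif_pos (by omega : j < c + 1), dif_pos (by omega : j' < c + 1)]
      exact_mod_cast o.strictMono (Fin.mk_lt_mk.2 hjj)
    have hidxW : ∀ j : ℕ, j ≤ c → W (idx j) = z' := by
      intro j hj
      have : idx j ∈ F' := by
        rw [hidx]; simp only [dif_pos (by omega : j < c + 1)]; exact (o ⟨j, by omega⟩).2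
      have := hF'sub this
      rw [hF, Finset.mem_filter] at this
      exact this.2
    -- build the chain
    set v : ℕ → ℝ := fun j => G (idx j) with hv
    set u : ℕ → ℝ := fun j => if h : j ≤ c then r ⟨(idx j : ℕ), by have := (idx j).2; omega⟩
      else r ⟨(idx c : ℕ) + 1, by have := (idx c).2; omega⟩ with hu
    apply exp_chain (hDeg z') (d * g) (v := v) (u := u)
    · intro i hi
      rw [hv, ← hidxW i hi]
      exact hGneg (idx i)
    · intro i hi
      have : u i ∈ S := by
        by_cases h : i ≤ c
        · simp only [hu]; rw [dif_pos h]; exact hRS (hrR _)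
        · simp only [hu]; rw [dif_neg h]; exact hRS (hrR _)
      exact (hmemS _).1 this z' hz'ne
    · intro i hi
      simp only [hu, hv]
      rw [dif_pos hi]
      exact hG1 (idx i)
    · intro i hi
      rcases lt_or_eq_of_le hi with hi' | hi'
      · have h1 : G (idx i) < r ⟨(idx i : ℕ) + 1, by have := (idx i).2; omega⟩ := hG2 (idx i)
        have h2 : (idx i : ℕ) + 1 ≤ (idx (i+1) : ℕ) := hidxmono i (i+1) (by omega) (by omega)
        simp only [hu, hv]
        rw [dif_pos (by omega : i + 1 ≤ c)]
        calc G (idx i) < r ⟨(idx i : ℕ) + 1, by have := (idx i).2; omega⟩ := h1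
          _ ≤ r ⟨(idx (i+1) : ℕ), by have := (idx (i+1)).2; omega⟩ := by
              rcases eq_or_lt_of_le h2 with h | h
              · exact le_of_eq (congrArg r (Fin.ext h))
              · exact (hrmono (Fin.mk_lt_mk.2 h)).le
      · subst hi'
        simp only [hu, hv]
        rw [dif_neg (by omega : ¬ (c + 1 ≤ c))]
        exact hG2 (idx c)
  -- maximal family of pairwise non-equivalent points
  classical
  set P : ℕ → Prop := fun n => ∃ R : Finset ℝ, ↑R ⊆ S ∧
    (∀ x ∈ R, ∀ y ∈ R, x ≠ y → ¬ (Set.uIcc x y ⊆ S)) ∧ R.card = n with hP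
  have hP0 : P 0 := ⟨∅, by simp, by simp, rfl⟩
  have hPbound : ∀ n, P n → n ≤ M := by
    rintro n ⟨R, h1, h2, h3⟩
    exact h3 ▸ key R h1 h2
  set k := Nat.findGreatest P M with hk
  have hPk : P k := Nat.findGreatest_spec (Nat.zero_le M) hP0
  obtain ⟨R, hRS, hRne, hRcard⟩ := hPk
  have hcover : ∀ x ∈ S, ∃ rr ∈ R, Set.uIcc rr x ⊆ S := by
    by_contra h
    push_neg at h
    obtain ⟨x, hxS, hx⟩ := h
    have hxR : x ∉ R := fun hxR => (hx x hxR) (by rw [Set.uIcc_self]; simpa using hxS)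
    have hnew : P (k + 1) := by
      refine ⟨insert x R, ?_, ?_, ?_⟩
      · rw [Finset.coe_insert]
        exact Set.insert_subset hxS hRS
      · intro p hp q hq hpq
        rcases Finset.mem_insert.1 hp with hpx | hpR
        · rcases Finset.mem_insert.1 hq with hqx | hqR
          · exact absurd (hpx.trans hqx.symm) hpq
          · subst hpx; rw [Set.uIcc_comm]; exact hx q hqR
        · rcases Finset.mem_insert.1 hq with hqx | hqR
          · subst hqx; exact hx p hpR
          · exact hRne p hpR q hqR hpq
      · rw [Finset.card_insert_of_notMem hxR, hRcard]
    have := Nat.le_findGreatest (hPbound _ hnew) hnew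
    omega
  -- build the decomposition
  refine ⟨R.card, by rw [hRcard]; exact hPbound k ⟨R, hRS, hRne, hRcard⟩, ?_⟩
  set rep : Fin R.card → ℝ := fun j => (R.equivFin.symm j : ℝ) with hrep
  have hrepR : ∀ j, rep j ∈ R := fun j => (R.equivFin.symm j).2
  have hrepinj : Function.Injective rep := by
    intro j j' hjj
    exact R.equivFin.symm.injective (Subtype.ext hjj)
  refine ⟨fun j => {x | x ∈ S ∧ Set.uIcc (rep j) x ⊆ S}, ?_, ?_, ?_⟩
  · intro j
    constructor
    intro x hx y hy
    intro w hw
    have hxyS : Set.uIcc x y ⊆ S := by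
      intro t ht
      rcases Set.uIcc_subset_uIcc_union_uIcc (b := rep j) ht with h | h
      · exact hx.2 (Set.uIcc_comm x (rep j) ▸ h)
      · exact hy.2 h
    have hwS : w ∈ S := hxyS (Set.Icc_subset_uIcc hw)
    refine ⟨hwS, ?_⟩
    intro t ht
    rcases Set.uIcc_subset_uIcc_union_uIcc (b := x) ht with h | h
    · exact hx.2 h
    · exact hxyS (Set.uIcc_subset_uIcc Set.left_mem_uIcc (Set.Icc_subset_uIcc hw) h)
  · intro j j' hne
    rw [Set.disjoint_left]
    rintro x ⟨hxS, hj⟩ ⟨_, hj'⟩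
    have hrne : rep j ≠ rep j' := fun h => hne (hrepinj h)
    apply hRne (rep j) (hrepR j) (rep j') (hrepR j') hrne
    intro t ht
    rcases Set.uIcc_subset_uIcc_union_uIcc (b := x) ht with h | h
    · exact hj h
    · exact hj' (Set.uIcc_comm (rep j') x ▸ h)
  · ext x
    simp only [Set.mem_iUnion, Set.mem_setOf_eq]
    constructor
    · intro hxS
      obtain ⟨rr, hrrR, hrr⟩ := hcover x hxS
      refine ⟨R.equivFin ⟨rr, hrrR⟩, hxS, ?_⟩
      have : rep (R.equivFin ⟨rr, hrrR⟩) = rr := by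
        rw [hrep]
        simp
      rw [this]
      exact hrr
    · rintro ⟨j, hxS, _⟩
      exact hxS
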